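/- Let θ ∈ Θ with θ ≠ θ*. If b_0(θ*) > 0 and q_t ∈ O(θ,θ*) for infinitely many t, then b_t(θ) → 0 as t → ∞ almost surely. -/

import Mathlib

open MeasureTheory Filter

/-- Kullback–Leibler divergence between two probability vectors on a finite set. -/
noncomputable def klDivFin {S : Type*} [Fintype S] (p r : S → ℝ) : ℝ :=
  ∑ s, if 0 < p s then p s * Real.log (p s / r s) else 0

lemma aux_integrable_comp_finite {Ω α : Type*} [MeasurableSpace Ω] (P : Measure Ω)
    [IsFiniteMeasure P] [Fintype α] [MeasurableSpace α] [MeasurableSingletonClass α]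
    (ψ : Ω → α) (hψ : Measurable ψ) (f : α → ℝ) :
    Integrable (fun ω => f (ψ ω)) P := by
  have hmeas : Measurable fun ω => f (ψ ω) := (measurable_of_countable f).comp hψ
  refine (integrable_const (∑ x, |f x|)).mono' hmeas.aestronglyMeasurable ?_
  refine Filter.Eventually.of_forall fun ω => ?_
  rw [Real.norm_eq_abs]
  exact Finset.single_le_sum (f := fun x => |f x|) (fun x _ => abs_nonneg _)
    (Finset.mem_univ (ψ ω))

lemma aux_indicator_comp {Ω α : Type*} (ψ : Ω → α) (C : Set α) (F : α → ℝ) (ω : Ω) :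
    Set.indicator (ψ ⁻¹' C) (fun ω' => F (ψ ω')) ω = Set.indicator C F (ψ ω) := by
  by_cases h : ψ ω ∈ C
  · rw [Set.indicator_of_mem h, Set.indicator_of_mem (by exact h)]
  · rw [Set.indicator_of_notMem h, Set.indicator_of_notMem (by exact h)]

lemma aux_bc_eq {a c : ℝ} (ha : 0 ≤ a) (hc : 0 < c) :
    c * Real.sqrt (a / c) = Real.sqrt a * Real.sqrt c := by
  have h1 : c * Real.sqrt (a / c) = Real.sqrt (c ^ 2) * Real.sqrt (a / c) := by
    rw [Real.sqrt_sq hc.le]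
  rw [h1, ← Real.sqrt_mul (sq_nonneg c), ← Real.sqrt_mul ha]
  congr 1
  field_simp

lemma aux_bc_term_le {a c : ℝ} (ha : 0 ≤ a) (hc : 0 ≤ c) :
    c * Real.sqrt (a / c) ≤ (a + c) / 2 := by
  rcases eq_or_lt_of_le hc with h | h
  · rw [← h]; simp; linarith
  · rw [aux_bc_eq ha h]
    nlinarith [sq_nonneg (Real.sqrt a - Real.sqrt c), Real.sq_sqrt ha, Real.sq_sqrt hc,
      Real.sqrt_nonneg a, Real.sqrt_nonneg c]

lemma aux_bc_term_lt {a c : ℝ} (ha : 0 ≤ a) (hc : 0 ≤ c) (hne : a ≠ c) :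
    c * Real.sqrt (a / c) < (a + c) / 2 := by
  rcases eq_or_lt_of_le hc with h | h
  · rw [← h]; simp
    rw [← h] at hne
    cases' lt_or_eq_of_le ha with h' h'
    · linarith
    · exact absurd h'.symm hne
  · rw [aux_bc_eq ha h]
    have hsne : Real.sqrt a ≠ Real.sqrt c := by
      intro heq
      apply hne
      rw [← Real.sq_sqrt ha, ← Real.sq_sqrt h.le, heq]
    have hpos : 0 < (Real.sqrt a - Real.sqrt c) ^ 2 :=
      lt_of_le_of_ne (sq_nonneg _) (Ne.symm (pow_ne_zero 2 (sub_ne_zero.mpr hsne)))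
    nlinarith [Real.sq_sqrt ha, Real.sq_sqrt hc]

lemma aux_rho_le_one {S : Type*} [Fintype S] (p r : S → ℝ)
    (hp : ∀ x, 0 ≤ p x) (hr : ∀ x, 0 ≤ r x)
    (hps : ∑ x, p x = 1) (hrs : ∑ x, r x = 1) :
    ∑ x, r x * Real.sqrt (p x / r x) ≤ 1 := by
  have h : ∑ x, r x * Real.sqrt (p x / r x) ≤ ∑ x, (p x + r x) / 2 :=
    Finset.sum_le_sum fun x _ => aux_bc_term_le (hp x) (hr x)
  have h2 : ∑ x, (p x + r x) / 2 = 1 := by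
    rw [← Finset.sum_div, Finset.sum_add_distrib, hps, hrs]
    norm_num
  linarith

lemma aux_rho_lt_one {S : Type*} [Fintype S] (p r : S → ℝ)
    (hp : ∀ x, 0 ≤ p x) (hr : ∀ x, 0 ≤ r x)
    (hps : ∑ x, p x = 1) (hrs : ∑ x, r x = 1) (hne : p ≠ r) :
    ∑ x, r x * Real.sqrt (p x / r x) < 1 := by
  obtain ⟨x₀, hx₀⟩ := Function.ne_iff.mp hne
  have h : ∑ x, r x * Real.sqrt (p x / r x) < ∑ x, (p x + r x) / 2 :=
    Finset.sum_lt_sum (fun x _ => aux_bc_term_le (hp x) (hr x))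
      ⟨x₀, Finset.mem_univ x₀, aux_bc_term_lt (hp x₀) (hr x₀) hx₀⟩
  have h2 : ∑ x, (p x + r x) / 2 = 1 := by
    rw [← Finset.sum_div, Finset.sum_add_distrib, hps, hrs]
    norm_num
  linarith

lemma aux_klDiv_pos_ne {S : Type*} [Fintype S] {p r : S → ℝ}
    (h : 0 < klDivFin p r) : p ≠ r := by
  intro heq
  rw [heq] at h
  have hz : klDivFin r r = 0 := by
    unfold klDivFin
    refine Finset.sum_eq_zero fun x _ => ?_
    split_ifs with hx
    · rw [div_self hx.ne', Real.log_one, mul_zero]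
    · rfl
  rw [hz] at h
  exact lt_irrefl 0 h

lemma aux_expectation_finite {Ω S : Type*} [MeasurableSpace Ω] (P : Measure Ω)
    [IsProbabilityMeasure P] [Fintype S] [MeasurableSpace S] [MeasurableSingletonClass S]
    (X : Ω → S) (hX : Measurable X) (w : S → ℝ) (hw : ∀ x, 0 ≤ w x)
    (hlaw : ∀ x, P {ω | X ω = x} = ENNReal.ofReal (w x)) (f : S → ℝ) :
    ∫ ω, f (X ω) ∂P = ∑ x, w x * f x := by
  have hms : ∀ x : S, MeasurableSet {ω | X ω = x} := fun x => hX (measurableSet_singleton x)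
  have hrepr : (fun ω => f (X ω)) =
      fun ω => ∑ x, Set.indicator {ω' | X ω' = x} (fun _ => f x) ω := by
    funext ω
    rw [Finset.sum_eq_single (X ω)]
    · rw [Set.indicator_of_mem (by exact rfl)]
    · intro x _ hx
      rw [Set.indicator_of_notMem]
      exact fun h => hx (h ▸ rfl)
    · exact fun h => absurd (Finset.mem_univ _) h
  rw [hrepr, integral_finset_sum]
  · refine Finset.sum_congr rfl fun x _ => ?_
    rw [integral_indicator_const (f x) (hms x), measureReal_def, hlaw x, smul_eq_mul,
      ENNReal.toReal_ofReal (hw x)]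
  · exact fun x _ => (integrable_const (f x)).indicator (hms x)

lemma aux_indep_V {Ω S : Type*} [MeasurableSpace Ω] {P : Measure Ω}
    [Fintype S] [MeasurableSpace S] [MeasurableSingletonClass S]
    (s : ℕ → Ω → S) (hs_meas : ∀ t, 1 ≤ t → Measurable (s t))
    (hs_indep : ProbabilityTheory.iIndepFun
      (fun (t : {t : ℕ // 1 ≤ t}) => s t.1) P) (u : ℕ) :
    ProbabilityTheory.IndepFun (fun ω (i : Fin u) => s (i.1 + 1) ω) (s (u + 1)) P := by
  classical
  set F₁ : Finset {t : ℕ // 1 ≤ t} := (Finset.Icc 1 u).subtype _ with hF₁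
  set F₂ : Finset {t : ℕ // 1 ≤ t} := {⟨u + 1, Nat.le_add_left 1 u⟩} with hF₂
  have hdisj : Disjoint F₁ F₂ := by
    rw [Finset.disjoint_left]
    intro i hi1 hi2
    rw [hF₁, Finset.mem_subtype, Finset.mem_Icc] at hi1
    rw [hF₂, Finset.mem_singleton] at hi2
    subst hi2
    have := hi1.2
    simp at this
  have base := hs_indep.indepFun_finset F₁ F₂ hdisj (fun i => hs_meas i.1 i.2)
  set φ : ({x // x ∈ F₁} → S) → (Fin u → S) := fun y j =>
    y ⟨⟨j.1 + 1, Nat.le_add_left 1 _⟩, by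
      rw [hF₁, Finset.mem_subtype, Finset.mem_Icc]
      exact ⟨Nat.le_add_left 1 _, Nat.succ_le_of_lt j.2⟩⟩ with hφ
  set ψ : ({x // x ∈ F₂} → S) → S := fun y =>
    y ⟨⟨u + 1, Nat.le_add_left 1 u⟩, by rw [hF₂]; exact Finset.mem_singleton_self _⟩ with hψ
  have := base.comp (measurable_of_countable φ) (measurable_of_countable ψ)
  exact this

lemma aux_fact {Ω S : Type*} [MeasurableSpace Ω] (P : Measure Ω) [IsProbabilityMeasure P]
    [Fintype S] [MeasurableSpace S] [MeasurableSingletonClass S]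
    (s : ℕ → Ω → S) (hs_meas : ∀ t, 1 ≤ t → Measurable (s t))
    (hs_indep : ProbabilityTheory.iIndepFun
      (fun (t : {t : ℕ // 1 ≤ t}) => s t.1) P) (u : ℕ) (g : (Fin u → S) → ℝ) (f : S → ℝ) :
    ∫ ω, g (fun i : Fin u => s (i.1 + 1) ω) * f (s (u + 1) ω) ∂P =
      (∫ ω, g (fun i : Fin u => s (i.1 + 1) ω) ∂P) * ∫ ω, f (s (u + 1) ω) ∂P := by
  have hV : Measurable (fun ω (i : Fin u) => s (i.1 + 1) ω) :=
    measurable_pi_lambda _ (fun i => hs_meas (i.1 + 1) (Nat.le_add_left 1 _))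
  have hind := (aux_indep_V s hs_meas hs_indep u).comp
    (measurable_of_countable g) (measurable_of_countable f)
  have h1 : Integrable (fun ω => g (fun i : Fin u => s (i.1 + 1) ω)) P :=
    aux_integrable_comp_finite P _ hV g
  have h2 : Integrable (fun ω => f (s (u + 1) ω)) P :=
    aux_integrable_comp_finite P _ (hs_meas (u + 1) (Nat.le_add_left 1 _)) f
  exact ProbabilityTheory.IndepFun.integral_mul_eq_mul_integral hind h1.aestronglyMeasurable h2.aestronglyMeasurable

/-- **Local beliefs on distinguishable false hypotheses vanish (Lemma 1, first part).**
`Θ` is a finite nonempty set of hypotheses with true hypothesis `θ* ∈ Θ`; `Q` a finite set of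
states; `S` a finite set of observations; `l` a likelihood function (nonnegative, summing to one
over `S` for every `θ, q`); `(q_t)` a fixed deterministic state path; the observations
`(s_t)_{t ≥ 1}` are mutually independent with `s_t` distributed according to `l(·|θ*,q_t)`; the
local beliefs evolve from a probability vector `b_0` by the Bayesian update. Let `θ ≠ θ*`. If
`b_0(θ*) > 0` and `q_t ∈ O(θ,θ*) = {q | D(l(·|θ,q) ‖ l(·|θ*,q)) > 0}` for infinitely many `t`,
then `b_t(θ) → 0` almost surely. -/
theorem local_belief_false_hypothesis_tendsto_zero
    {Θ : Type*} [Fintype Θ] [Nonempty Θ] (θstar : Θ)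
    {Q : Type*} [Fintype Q]
    {S : Type*} [Fintype S] [Nonempty S] [MeasurableSpace S] [MeasurableSingletonClass S]
    (l : Θ → Q → S → ℝ)
    (hl_nonneg : ∀ θ q s, 0 ≤ l θ q s)
    (hl_sum : ∀ θ q, ∑ s, l θ q s = 1)
    (q : ℕ → Q)
    {Ω : Type*} [MeasurableSpace Ω] (P : Measure Ω) [IsProbabilityMeasure P]
    (s : ℕ → Ω → S)
    (hs_meas : ∀ t, 1 ≤ t → Measurable (s t))
    (hs_law : ∀ t, 1 ≤ t → ∀ x, P {ω | s t ω = x} = ENNReal.ofReal (l θstar (q t) x))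
    (hs_indep : ProbabilityTheory.iIndepFun
      (fun (t : {t : ℕ // 1 ≤ t}) => s t.1) P)
    (b : ℕ → Θ → Ω → ℝ)
    (b0 : Θ → ℝ)
    (hb0_nonneg : ∀ θ, 0 ≤ b0 θ) (hb0_sum : ∑ θ, b0 θ = 1)
    (hb_init : ∀ θ ω, b 0 θ ω = b0 θ)
    (hb_upd : ∀ t θ ω, b (t + 1) θ ω =
      l θ (q (t + 1)) (s (t + 1) ω) * b t θ ω /
        ∑ θ', l θ' (q (t + 1)) (s (t + 1) ω) * b t θ' ω)
    (θ : Θ) (hθ : θ ≠ θstar)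
    (hb0_star : 0 < b0 θstar)
    (hsource : {t : ℕ | 0 < klDivFin (l θ (q t)) (l θstar (q t))}.Infinite) :
    ∀ᵐ ω ∂P, Tendsto (fun t => b t θ ω) atTop (nhds 0) := by
  classical
  -- local notation
  set c0 : ℝ := Real.sqrt (b0 θ / b0 θstar) with hc0_def
  set hf : ℕ → S → ℝ := fun t x => Real.sqrt (l θ (q t) x / l θstar (q t) x) with hhf_def
  set Y : ℕ → Ω → ℝ := fun n ω => c0 * ∏ i ∈ Finset.range n, hf (i + 1) (s (i + 1) ω)
    with hY_def
  set ρ : Q → ℝ := fun qq => ∑ x, l θstar qq x * Real.sqrt (l θ qq x / l θstar qq x)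
    with hρ_def
  set V : (u : ℕ) → Ω → (Fin u → S) := fun u ω i => s (i.1 + 1) ω with hV_def
  set pad : (u : ℕ) → (Fin u → S) → ℕ → S :=
    fun u x i => if h : i < u then x ⟨i, h⟩ else Classical.arbitrary S with hpad_def
  set yh : ℕ → (ℕ → S) → ℝ := fun v z => c0 * ∏ i ∈ Finset.range v, hf (i + 1) (z i)
    with hyh_def
  -- trivial bounds
  have hc0 : 0 ≤ c0 := Real.sqrt_nonneg _
  have hfnn : ∀ t x, 0 ≤ hf t x := fun t x => Real.sqrt_nonneg _
  have hYnn : ∀ n ω, 0 ≤ Y n ω := fun n ω =>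
    mul_nonneg hc0 (Finset.prod_nonneg fun i _ => hfnn _ _)
  have hyhnn : ∀ v z, 0 ≤ yh v z := fun v z =>
    mul_nonneg hc0 (Finset.prod_nonneg fun i _ => hfnn _ _)
  have hYsucc : ∀ n ω, Y (n + 1) ω = Y n ω * hf (n + 1) (s (n + 1) ω) := by
    intro n ω
    simp only [hY_def, Finset.prod_range_succ, mul_assoc]
  have hVmeas : ∀ u, Measurable (V u) := fun u =>
    measurable_pi_lambda _ (fun i => hs_meas _ (Nat.le_add_left 1 _))
  have hrep : ∀ u v (ω : Ω), v ≤ u → yh v (pad u (V u ω)) = Y v ω := by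
    intro u v ω hvu
    simp only [hyh_def, hY_def]
    congr 1
    refine Finset.prod_congr rfl fun i hi => ?_
    rw [Finset.mem_range] at hi
    rw [hpad_def]
    simp only
    rw [dif_pos (lt_of_lt_of_le hi hvu)]
  have hYfun : ∀ u, Y u = fun ω => yh u (pad u (V u ω)) :=
    fun u => funext fun ω => (hrep u u ω le_rfl).symm
  have hYmeas : ∀ u, Measurable (Y u) := by
    intro u
    rw [hYfun u]
    exact (measurable_of_countable (fun x => yh u (pad u x))).comp (hVmeas u)
  -- expectations
  have hEV : ∀ t, 1 ≤ t → ∀ f : S → ℝ,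
      ∫ ω, f (s t ω) ∂P = ∑ x, l θstar (q t) x * f x := fun t ht f =>
    aux_expectation_finite P (s t) (hs_meas t ht) _ (fun x => hl_nonneg _ _ _)
      (hs_law t ht) f
  have hEhf : ∀ u : ℕ, ∫ ω, hf (u + 1) (s (u + 1) ω) ∂P = ρ (q (u + 1)) := by
    intro u
    rw [hEV (u + 1) (Nat.le_add_left 1 _) (hf (u + 1))]
  have hρnn : ∀ qq, 0 ≤ ρ qq := fun qq =>
    Finset.sum_nonneg fun x _ => mul_nonneg (hl_nonneg _ _ _) (Real.sqrt_nonneg _)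
  have hρle : ∀ qq, ρ qq ≤ 1 := fun qq =>
    aux_rho_le_one _ _ (fun x => hl_nonneg _ _ _) (fun x => hl_nonneg _ _ _)
      (hl_sum θ qq) (hl_sum θstar qq)
  have hρlt : ∀ qq, 0 < klDivFin (l θ qq) (l θstar qq) → ρ qq < 1 := fun qq h =>
    aux_rho_lt_one _ _ (fun x => hl_nonneg _ _ _) (fun x => hl_nonneg _ _ _)
      (hl_sum θ qq) (hl_sum θstar qq) (aux_klDiv_pos_ne h)
  have hfact : ∀ (u : ℕ) (g : (Fin u → S) → ℝ) (f : S → ℝ),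
      ∫ ω, g (V u ω) * f (s (u + 1) ω) ∂P =
        (∫ ω, g (V u ω) ∂P) * ∫ ω, f (s (u + 1) ω) ∂P := fun u g f =>
    aux_fact P s hs_meas hs_indep u g f
  have hEY : ∀ m : ℕ, ∫ ω, Y m ω ∂P = c0 * ∏ i ∈ Finset.range m, ρ (q (i + 1)) := by
    intro m
    induction m with
    | zero => simp [hY_def]
    | succ m ih =>
      have h1 : ∀ ω, Y (m + 1) ω =
          (fun x => yh m (pad m x)) (V m ω) * hf (m + 1) (s (m + 1) ω) := by
        intro ω
        rw [hYsucc m ω]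
        congr 1
        exact (hrep m m ω le_rfl).symm
      calc ∫ ω, Y (m + 1) ω ∂P
          = ∫ ω, (fun x => yh m (pad m x)) (V m ω) * hf (m + 1) (s (m + 1) ω) ∂P :=
            integral_congr_ae (Filter.Eventually.of_forall h1)
        _ = (∫ ω, (fun x => yh m (pad m x)) (V m ω) ∂P) * ρ (q (m + 1)) := by
            rw [← hEhf m]
            exact hfact m (fun x => yh m (pad m x)) (hf (m + 1))
        _ = (∫ ω, Y m ω ∂P) * ρ (q (m + 1)) := by
            congr 1
            exact integral_congr_ae (Filter.Eventually.of_forall fun ω => hrep m m ω le_rfl)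
        _ = c0 * ∏ i ∈ Finset.range (m + 1), ρ (q (i + 1)) := by
            rw [ih, Finset.prod_range_succ]
            ring
  -- pigeonhole: a frequently-visited informative state
  have hpigeon : ∃ qs : Q, ρ qs < 1 ∧ {t : ℕ | 1 ≤ t ∧ q t = qs}.Infinite := by
    have hfib : ∃ qs : Q,
        {t : ℕ | (1 ≤ t ∧ 0 < klDivFin (l θ (q t)) (l θstar (q t))) ∧ q t = qs}.Infinite := by
      by_contra hcon
      push_neg at hcon
      have hT : {t : ℕ | 1 ≤ t ∧ 0 < klDivFin (l θ (q t)) (l θstar (q t))}.Infinite := by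
        have h1 := hsource.diff (Set.finite_singleton 0)
        refine h1.mono fun t ht => ?_
        obtain ⟨ht1, ht2⟩ := ht
        simp only [Set.mem_singleton_iff] at ht2
        exact ⟨Nat.one_le_iff_ne_zero.mpr ht2, ht1⟩
      apply hT
      have hun : {t : ℕ | 1 ≤ t ∧ 0 < klDivFin (l θ (q t)) (l θstar (q t))} =
          ⋃ qs ∈ (Finset.univ : Finset Q),
            {t : ℕ | (1 ≤ t ∧ 0 < klDivFin (l θ (q t)) (l θstar (q t))) ∧ q t = qs} := by
        ext t
        simp only [Set.mem_setOf_eq, Set.mem_iUnion]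
        constructor
        · intro h
          exact ⟨q t, Finset.mem_univ _, h, rfl⟩
        · rintro ⟨qs, _, h, _⟩
          exact h
      rw [hun]
      exact Set.Finite.biUnion (Finset.univ : Finset Q).finite_toSet
        fun qs _ => hcon qs
    obtain ⟨qs, hqs⟩ := hfib
    obtain ⟨t0, ht0⟩ := hqs.nonempty
    refine ⟨qs, ?_, hqs.mono fun t ht => ⟨ht.1.1, ht.2⟩⟩
    have := ht0.1.2
    rw [ht0.2] at this
    exact hρlt qs this
  obtain ⟨qs, hρs, hTqs⟩ := hpigeon
  -- arbitrarily small expectations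
  have hsmall : ∀ k : ℕ, ∃ m : ℕ, ∫ ω, Y m ω ∂P ≤ c0 * ρ qs ^ k := by
    intro k
    have hTg : {i : ℕ | q (i + 1) = qs}.Infinite := by
      have himg : (fun t => t - 1) '' {t : ℕ | 1 ≤ t ∧ q t = qs} ⊆ {i : ℕ | q (i + 1) = qs} := by
        rintro i ⟨t, ⟨ht1, ht2⟩, rfl⟩
        simp only [Set.mem_setOf_eq]
        rwa [Nat.sub_add_cancel ht1]
      refine Set.Infinite.mono himg (Set.Infinite.image ?_ hTqs)
      intro a ha b hb hab
      simp only [Set.mem_setOf_eq] at ha hb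
      simp only at hab
      omega
    obtain ⟨F, hFsub, hFcard⟩ := hTg.exists_subset_card_eq k
    refine ⟨F.sup id + 1, ?_⟩
    rw [hEY (F.sup id + 1)]
    have hsub : F ⊆ Finset.range (F.sup id + 1) := fun i hi =>
      Finset.mem_range.mpr (Nat.lt_succ_of_le (Finset.le_sup (f := id) hi))
    have hsplit := Finset.prod_sdiff (f := fun i => ρ (q (i + 1))) hsub
    have hFprod : ∏ i ∈ F, ρ (q (i + 1)) = ρ qs ^ k := by
      rw [Finset.prod_congr rfl fun i hi => by rw [hFsub hi], Finset.prod_const, hFcard]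
    have hrest : ∏ i ∈ Finset.range (F.sup id + 1) \ F, ρ (q (i + 1)) ≤ 1 :=
      Finset.prod_le_one (fun i _ => hρnn _) (fun i _ => hρle _)
    have hrestnn : 0 ≤ ∏ i ∈ Finset.range (F.sup id + 1) \ F, ρ (q (i + 1)) :=
      Finset.prod_nonneg fun i _ => hρnn _
    have : ∏ i ∈ Finset.range (F.sup id + 1), ρ (q (i + 1)) ≤ ρ qs ^ k := by
      rw [← hsplit, hFprod]
      exact mul_le_of_le_one_left (pow_nonneg (hρnn qs) k) hrest
    exact mul_le_mul_of_nonneg_left this hc0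
  -- Doob-type maximal inequality for the nonnegative supermartingale Y
  have hmax : ∀ ε : ℝ, 0 < ε → ∀ m n : ℕ,
      ε * (P {ω | ∃ u, m ≤ u ∧ u ≤ m + n ∧ ε ≤ Y u ω}).toReal ≤ ∫ ω, Y m ω ∂P := by
    intro ε hε m n
    set B : ℕ → Set Ω := fun u => {ω | ∀ v, m ≤ v → v < u → Y v ω < ε} with hB_def
    set A : ℕ → Set Ω := fun u => B u ∩ {ω | ε ≤ Y u ω} with hA_def
    set BH : (u : ℕ) → Set (Fin u → S) :=
      fun u => {x | ∀ v, m ≤ v → v < u → yh v (pad u x) < ε} with hBH_def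
    set BH' : (u : ℕ) → Set (Fin u → S) :=
      fun u => {x | ∀ v, m ≤ v → v ≤ u → yh v (pad u x) < ε} with hBH'_def
    set AH : (u : ℕ) → Set (Fin u → S) :=
      fun u => {x | (∀ v, m ≤ v → v < u → yh v (pad u x) < ε) ∧ ε ≤ yh u (pad u x)}
      with hAH_def
    have hBrep0 : ∀ u, B u = V u ⁻¹' BH u := by
      intro u
      ext ω
      simp only [hB_def, hBH_def, Set.mem_setOf_eq, Set.mem_preimage]
      constructor
      · intro h v h1 h2
        rw [hrep u v ω h2.le]
        exact h v h1 h2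
      · intro h v h1 h2
        rw [← hrep u v ω h2.le]
        exact h v h1 h2
    have hBrep : ∀ u, B (u + 1) = V u ⁻¹' BH' u := by
      intro u
      ext ω
      simp only [hB_def, hBH'_def, Set.mem_setOf_eq, Set.mem_preimage]
      constructor
      · intro h v h1 h2
        rw [hrep u v ω h2]
        exact h v h1 (Nat.lt_succ_of_le h2)
      · intro h v h1 h2
        have h2' : v ≤ u := Nat.lt_succ_iff.mp h2
        rw [← hrep u v ω h2']
        exact h v h1 h2'
    have hArep : ∀ u, A u = V u ⁻¹' AH u := by
      intro u
      ext ω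
      simp only [hA_def, hB_def, hAH_def, Set.mem_inter_iff, Set.mem_setOf_eq,
        Set.mem_preimage]
      constructor
      · rintro ⟨h1, h2⟩
        refine ⟨fun v hv1 hv2 => ?_, ?_⟩
        · rw [hrep u v ω hv2.le]; exact h1 v hv1 hv2
        · rw [hrep u u ω le_rfl]; exact h2
      · rintro ⟨h1, h2⟩
        refine ⟨fun v hv1 hv2 => ?_, ?_⟩
        · rw [← hrep u v ω hv2.le]; exact h1 v hv1 hv2
        · rw [← hrep u u ω le_rfl]; exact h2
    have hBms : ∀ u, MeasurableSet (B u) := fun u => by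
      rw [hBrep0 u]; exact hVmeas u ((Set.to_countable _).measurableSet)
    have hAms : ∀ u, MeasurableSet (A u) := fun u => by
      rw [hArep u]; exact hVmeas u ((Set.to_countable _).measurableSet)
    -- indicator compositions
    have hindA : ∀ u, Set.indicator (A u) (Y u) =
        fun ω => Set.indicator (AH u) (fun x => yh u (pad u x)) (V u ω) := by
      intro u
      funext ω
      rw [hArep u, hYfun u]
      exact aux_indicator_comp (V u) (AH u) (fun x => yh u (pad u x)) ω
    have hindB : ∀ u, Set.indicator (B (u + 1)) (Y u) =
        fun ω => Set.indicator (BH' u) (fun x => yh u (pad u x)) (V u ω) := by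
      intro u
      funext ω
      rw [hBrep u, hYfun u]
      exact aux_indicator_comp (V u) (BH' u) (fun x => yh u (pad u x)) ω
    have hindB0 : ∀ u, Set.indicator (B u) (Y u) =
        fun ω => Set.indicator (BH u) (fun x => yh u (pad u x)) (V u ω) := by
      intro u
      funext ω
      rw [hBrep0 u, hYfun u]
      exact aux_indicator_comp (V u) (BH u) (fun x => yh u (pad u x)) ω
    -- integrability
    have hintA : ∀ u, Integrable (Set.indicator (A u) (Y u)) P := by
      intro u
      rw [hindA u]
      exact aux_integrable_comp_finite P (V u) (hVmeas u) _
    have hintB : ∀ u, Integrable (Set.indicator (B (u + 1)) (Y u)) P := by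
      intro u
      rw [hindB u]
      exact aux_integrable_comp_finite P (V u) (hVmeas u) _
    have hintB0 : ∀ u, Integrable (Set.indicator (B u) (Y u)) P := by
      intro u
      rw [hindB0 u]
      exact aux_integrable_comp_finite P (V u) (hVmeas u) _
    -- pointwise splitting
    have hsplit : ∀ u, m ≤ u → ∀ ω, Set.indicator (B u) (Y u) ω =
        Set.indicator (A u) (Y u) ω + Set.indicator (B (u + 1)) (Y u) ω := by
      intro u hu ω
      by_cases hBu : ω ∈ B u
      · by_cases hY : ε ≤ Y u ω
        · have hA : ω ∈ A u := ⟨hBu, hY⟩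
          have hB' : ω ∉ B (u + 1) := by
            intro hB'
            exact absurd (hB' u hu (Nat.lt_succ_self u)) (not_lt.mpr hY)
          rw [Set.indicator_of_mem hBu, Set.indicator_of_mem hA,
            Set.indicator_of_notMem hB', add_zero]
        · have hA : ω ∉ A u := fun h => hY h.2
          have hB' : ω ∈ B (u + 1) := by
            intro v hv1 hv2
            rcases Nat.lt_succ_iff_lt_or_eq.mp hv2 with h | h
            · exact hBu v hv1 h
            · rw [h]; exact not_le.mp hY
          rw [Set.indicator_of_mem hBu, Set.indicator_of_notMem hA,
            Set.indicator_of_mem hB', zero_add]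
      · have hA : ω ∉ A u := fun h => hBu h.1
        have hB' : ω ∉ B (u + 1) := by
          intro hB'
          exact hBu fun v hv1 hv2 => hB' v hv1 (Nat.lt_succ_of_lt hv2)
        rw [Set.indicator_of_notMem hBu, Set.indicator_of_notMem hA,
          Set.indicator_of_notMem hB', add_zero]
    -- one-step supermartingale inequality
    have hstep : ∀ u : ℕ, ∫ ω, Set.indicator (B (u + 1)) (Y (u + 1)) ω ∂P ≤
        ∫ ω, Set.indicator (B (u + 1)) (Y u) ω ∂P := by
      intro u
      have hptw : ∀ ω, Set.indicator (B (u + 1)) (Y (u + 1)) ω =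
          Set.indicator (BH' u) (fun x => yh u (pad u x)) (V u ω) *
            hf (u + 1) (s (u + 1) ω) := by
        intro ω
        by_cases hmem : ω ∈ B (u + 1)
        · have hx : V u ω ∈ BH' u := by
            rw [hBrep u] at hmem
            exact hmem
          rw [Set.indicator_of_mem hmem, Set.indicator_of_mem hx, hYsucc u ω,
            hrep u u ω le_rfl]
        · have hx : V u ω ∉ BH' u := by
            rw [hBrep u] at hmem
            exact hmem
          rw [Set.indicator_of_notMem hmem, Set.indicator_of_notMem hx, zero_mul]
      have hGnn : 0 ≤ ∫ ω, Set.indicator (BH' u) (fun x => yh u (pad u x)) (V u ω) ∂P :=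
        integral_nonneg fun ω => Set.indicator_nonneg (fun x _ => hyhnn _ _) _
      calc ∫ ω, Set.indicator (B (u + 1)) (Y (u + 1)) ω ∂P
          = ∫ ω, Set.indicator (BH' u) (fun x => yh u (pad u x)) (V u ω) *
              hf (u + 1) (s (u + 1) ω) ∂P :=
            integral_congr_ae (Filter.Eventually.of_forall hptw)
        _ = (∫ ω, Set.indicator (BH' u) (fun x => yh u (pad u x)) (V u ω) ∂P) *
              ρ (q (u + 1)) := by
            rw [← hEhf u]
            exact hfact u (Set.indicator (BH' u) (fun x => yh u (pad u x))) (hf (u + 1))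
        _ ≤ ∫ ω, Set.indicator (BH' u) (fun x => yh u (pad u x)) (V u ω) ∂P :=
            mul_le_of_le_one_right hGnn (hρle _)
        _ = ∫ ω, Set.indicator (B (u + 1)) (Y u) ω ∂P := by
            rw [hindB u]
    -- telescoping
    have hBm : B m = Set.univ := by
      ext ω
      simp only [hB_def, Set.mem_setOf_eq, Set.mem_univ, iff_true]
      intro v h1 h2
      omega
    have htel : ∀ k : ℕ,
        (∑ j ∈ Finset.range (k + 1), ∫ ω, Set.indicator (A (m + j)) (Y (m + j)) ω ∂P) +
          ∫ ω, Set.indicator (B (m + k + 1)) (Y (m + k + 1)) ω ∂P ≤ ∫ ω, Y m ω ∂P := by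
      intro k
      induction k with
      | zero =>
        rw [Finset.sum_range_one]
        have h1 : ∫ ω, Y m ω ∂P = ∫ ω, Set.indicator (B m) (Y m) ω ∂P := by
          rw [hBm]
          simp [Set.indicator_univ]
        have h2 : ∫ ω, Set.indicator (B m) (Y m) ω ∂P =
            (∫ ω, Set.indicator (A m) (Y m) ω ∂P) +
              ∫ ω, Set.indicator (B (m + 1)) (Y m) ω ∂P := by
          rw [← integral_add (hintA m) (hintB m)]
          exact integral_congr_ae (Filter.Eventually.of_forall (hsplit m le_rfl))
        have h3 := hstep m
        simp only [Nat.add_zero]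
        linarith
      | succ k ih =>
        have h2 : ∫ ω, Set.indicator (B (m + k + 1)) (Y (m + k + 1)) ω ∂P =
            (∫ ω, Set.indicator (A (m + k + 1)) (Y (m + k + 1)) ω ∂P) +
              ∫ ω, Set.indicator (B (m + k + 1 + 1)) (Y (m + k + 1)) ω ∂P := by
          rw [← integral_add (hintA (m + k + 1)) (hintB (m + k + 1))]
          exact integral_congr_ae
            (Filter.Eventually.of_forall (hsplit (m + k + 1) (by omega)))
        have h3 := hstep (m + k + 1)
        rw [Finset.sum_range_succ]
        simp only [← Nat.add_assoc]
        linarith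
    -- measure bound
    have hsubA : {ω | ∃ u, m ≤ u ∧ u ≤ m + n ∧ ε ≤ Y u ω} ⊆
        ⋃ j ∈ Finset.range (n + 1), A (m + j) := by
      rintro ω ⟨u, hu1, hu2, hu3⟩
      have hex : ∃ u, m ≤ u ∧ ε ≤ Y u ω := ⟨u, hu1, hu3⟩
      set u₀ := Nat.find hex with hu₀_def
      have hspec := Nat.find_spec hex
      have hle : u₀ ≤ u := Nat.find_min' hex ⟨hu1, hu3⟩
      have hmem : ω ∈ A u₀ := by
        refine ⟨fun v hv1 hv2 => ?_, hspec.2⟩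
        by_contra hcon
        exact absurd (Nat.find_min' hex ⟨hv1, not_lt.mp hcon⟩) (not_le.mpr hv2)
      have hj : u₀ - m < n + 1 := by omega
      refine Set.mem_biUnion (Finset.mem_range.mpr hj) ?_
      have : m + (u₀ - m) = u₀ := by omega
      rw [this]
      exact hmem
    have hPbound : (P {ω | ∃ u, m ≤ u ∧ u ≤ m + n ∧ ε ≤ Y u ω}).toReal ≤
        ∑ j ∈ Finset.range (n + 1), (P (A (m + j))).toReal := by
      have h1 : P {ω | ∃ u, m ≤ u ∧ u ≤ m + n ∧ ε ≤ Y u ω} ≤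
          ∑ j ∈ Finset.range (n + 1), P (A (m + j)) :=
        le_trans (measure_mono hsubA) (measure_biUnion_finset_le _ _)
      have h2 : (∑ j ∈ Finset.range (n + 1), P (A (m + j))).toReal =
          ∑ j ∈ Finset.range (n + 1), (P (A (m + j))).toReal :=
        ENNReal.toReal_sum fun j _ => measure_ne_top P _
      rw [← h2]
      exact ENNReal.toReal_mono
        (ENNReal.sum_ne_top.mpr fun j _ => measure_ne_top P _) h1
    have hterm : ∀ u : ℕ, ε * (P (A u)).toReal ≤
        ∫ ω, Set.indicator (A u) (Y u) ω ∂P := by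
      intro u
      have hptw : ∀ ω, Set.indicator (A u) (fun _ => ε) ω ≤ Set.indicator (A u) (Y u) ω := by
        intro ω
        by_cases hm : ω ∈ A u
        · rw [Set.indicator_of_mem hm, Set.indicator_of_mem hm]
          exact hm.2
        · rw [Set.indicator_of_notMem hm, Set.indicator_of_notMem hm]
      have h1 : ∫ ω, Set.indicator (A u) (fun _ => ε) ω ∂P = (P (A u)).toReal * ε := by
        rw [integral_indicator_const ε (hAms u), smul_eq_mul, measureReal_def]
      calc ε * (P (A u)).toReal = (P (A u)).toReal * ε := mul_comm _ _
        _ = ∫ ω, Set.indicator (A u) (fun _ => ε) ω ∂P := h1.symm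
        _ ≤ ∫ ω, Set.indicator (A u) (Y u) ω ∂P :=
            integral_mono ((integrable_const ε).indicator (hAms u)) (hintA u) hptw
    have hfinal : ∑ j ∈ Finset.range (n + 1),
        ∫ ω, Set.indicator (A (m + j)) (Y (m + j)) ω ∂P ≤ ∫ ω, Y m ω ∂P := by
      have h1 := htel n
      have h2 : 0 ≤ ∫ ω, Set.indicator (B (m + n + 1)) (Y (m + n + 1)) ω ∂P :=
        integral_nonneg fun ω => Set.indicator_nonneg (fun ω' _ => hYnn _ _) _
      linarith
    calc ε * (P {ω | ∃ u, m ≤ u ∧ u ≤ m + n ∧ ε ≤ Y u ω}).toReal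
        ≤ ε * ∑ j ∈ Finset.range (n + 1), (P (A (m + j))).toReal :=
          mul_le_mul_of_nonneg_left hPbound hε.le
      _ = ∑ j ∈ Finset.range (n + 1), ε * (P (A (m + j))).toReal := Finset.mul_sum _ _ _
      _ ≤ ∑ j ∈ Finset.range (n + 1),
            ∫ ω, Set.indicator (A (m + j)) (Y (m + j)) ω ∂P :=
          Finset.sum_le_sum fun j _ => hterm (m + j)
      _ ≤ ∫ ω, Y m ω ∂P := hfinal
  -- limsup events are null
  have hLnull : ∀ ε : ℝ, 0 < ε → P {ω | ∀ m : ℕ, ∃ u, m ≤ u ∧ ε ≤ Y u ω} = 0 := by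
    intro ε hε
    have hbound : ∀ m : ℕ, P {ω | ∀ m : ℕ, ∃ u, m ≤ u ∧ ε ≤ Y u ω} ≤
        ENNReal.ofReal ((∫ ω, Y m ω ∂P) / ε) := by
      intro m
      set E : ℕ → Set Ω := fun n => {ω | ∃ u, m ≤ u ∧ u ≤ m + n ∧ ε ≤ Y u ω} with hE_def
      have hEmono : Monotone E := by
        intro n1 n2 h12 ω hω
        obtain ⟨u, h1, h2, h3⟩ := hω
        exact ⟨u, h1, by omega, h3⟩
      have hEbound : ∀ n, P (E n) ≤ ENNReal.ofReal ((∫ ω, Y m ω ∂P) / ε) := by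
        intro n
        have h1 := hmax ε hε m n
        have h2 : (P (E n)).toReal ≤ (∫ ω, Y m ω ∂P) / ε := by
          rw [le_div_iff₀ hε]
          calc (P (E n)).toReal * ε = ε * (P (E n)).toReal := mul_comm _ _
            _ ≤ ∫ ω, Y m ω ∂P := h1
        calc P (E n) = ENNReal.ofReal ((P (E n)).toReal) :=
              (ENNReal.ofReal_toReal (measure_ne_top P _)).symm
          _ ≤ ENNReal.ofReal ((∫ ω, Y m ω ∂P) / ε) := ENNReal.ofReal_le_ofReal h2
      have hsub : {ω | ∀ m : ℕ, ∃ u, m ≤ u ∧ ε ≤ Y u ω} ⊆ ⋃ n, E n := by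
        intro ω hω
        obtain ⟨u, h1, h2⟩ := hω m
        exact Set.mem_iUnion.mpr ⟨u - m, ⟨u, h1, by omega, h2⟩⟩
      have htend := tendsto_measure_iUnion_atTop (μ := P) hEmono
      have hle : P (⋃ n, E n) ≤ ENNReal.ofReal ((∫ ω, Y m ω ∂P) / ε) :=
        le_of_tendsto htend (Filter.Eventually.of_forall hEbound)
      exact le_trans (measure_mono hsub) hle
    have hb2 : ∀ k : ℕ, P {ω | ∀ m : ℕ, ∃ u, m ≤ u ∧ ε ≤ Y u ω} ≤
        ENNReal.ofReal (c0 * ρ qs ^ k / ε) := by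
      intro k
      obtain ⟨m, hm⟩ := hsmall k
      refine le_trans (hbound m) (ENNReal.ofReal_le_ofReal ?_)
      gcongr
    have htendk : Tendsto (fun k : ℕ => ENNReal.ofReal (c0 * ρ qs ^ k / ε)) atTop (nhds 0) := by
      have h1 : Tendsto (fun k : ℕ => c0 * ρ qs ^ k / ε) atTop (nhds 0) := by
        have h0 := tendsto_pow_atTop_nhds_zero_of_lt_one (hρnn qs) hρs
        have h2 := (h0.const_mul c0).div_const ε
        simpa using h2
      have h3 := ENNReal.tendsto_ofReal h1
      simpa using h3
    have hle0 : P {ω | ∀ m : ℕ, ∃ u, m ≤ u ∧ ε ≤ Y u ω} ≤ 0 := ge_of_tendsto' htendk hb2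
    exact le_antisymm hle0 (by simp)
  -- almost surely all likelihoods along the path are positive
  have hGnull : P {ω | ¬ ∀ t, 1 ≤ t → 0 < l θstar (q t) (s t ω)} = 0 := by
    have hsub : {ω | ¬ ∀ t, 1 ≤ t → 0 < l θstar (q t) (s t ω)} ⊆
        ⋃ (t : ℕ), ⋃ (x : S), {ω | 1 ≤ t ∧ l θstar (q t) x = 0 ∧ s t ω = x} := by
      intro ω hω
      push_neg at hω
      obtain ⟨t, ht, hl⟩ := hω
      have hz : l θstar (q t) (s t ω) = 0 := le_antisymm hl (hl_nonneg _ _ _)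
      exact Set.mem_iUnion.mpr ⟨t, Set.mem_iUnion.mpr ⟨s t ω, ht, hz, rfl⟩⟩
    refine measure_mono_null hsub
      (measure_iUnion_null fun t => measure_iUnion_null fun x => ?_)
    by_cases hc : 1 ≤ t ∧ l θstar (q t) x = 0
    · have hss : {ω | 1 ≤ t ∧ l θstar (q t) x = 0 ∧ s t ω = x} ⊆ {ω | s t ω = x} :=
        fun ω h => h.2.2
      refine measure_mono_null hss ?_
      rw [hs_law t hc.1 x, hc.2]
      simp
    · have hss : {ω | 1 ≤ t ∧ l θstar (q t) x = 0 ∧ s t ω = x} = ∅ := by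
        ext ω
        simp only [Set.mem_setOf_eq, Set.mem_empty_iff_false, iff_false]
        intro h
        exact hc ⟨h.1, h.2.1⟩
      rw [hss]
      exact measure_empty
  -- the null set
  set N : Set Ω := {ω | ¬ ∀ t, 1 ≤ t → 0 < l θstar (q t) (s t ω)} ∪
    ⋃ j : ℕ, {ω | ∀ m : ℕ, ∃ u, m ≤ u ∧ (1 : ℝ) / (j + 1) ≤ Y u ω} with hN_def
  have hNnull : P N = 0 :=
    measure_union_null hGnull (measure_iUnion_null fun j => hLnull _ (by positivity))
  have hgood : ∀ ω, ω ∉ N → Tendsto (fun t => b t θ ω) atTop (nhds 0) := by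
    intro ω hω
    have hG' : ω ∉ {ω | ¬ ∀ t, 1 ≤ t → 0 < l θstar (q t) (s t ω)} :=
      fun h => hω (Set.mem_union_left _ h)
    have hG : ∀ t, 1 ≤ t → 0 < l θstar (q t) (s t ω) := not_not.mp hG'
    have hLj : ∀ j : ℕ, ∃ m : ℕ, ∀ u, m ≤ u → Y u ω < 1 / (j + 1) := by
      intro j
      have h1 : ω ∉ {ω | ∀ m : ℕ, ∃ u, m ≤ u ∧ (1 : ℝ) / (j + 1) ≤ Y u ω} :=
        fun h => hω (Set.mem_union_right _ (Set.mem_iUnion.mpr ⟨j, h⟩))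
      simp only [Set.mem_setOf_eq] at h1
      push_neg at h1
      obtain ⟨m, hm⟩ := h1
      exact ⟨m, fun u hu => hm u hu⟩
    have hY0 : Tendsto (fun u => Y u ω) atTop (nhds 0) := by
      rw [Metric.tendsto_atTop]
      intro δ hδ
      obtain ⟨j, hj⟩ := exists_nat_one_div_lt hδ
      obtain ⟨m, hm⟩ := hLj j
      refine ⟨m, fun u hu => ?_⟩
      rw [Real.dist_eq, sub_zero, abs_of_nonneg (hYnn u ω)]
      calc Y u ω < 1 / (j + 1) := hm u hu
        _ < δ := hj
    have hbel : ∀ t, (∀ θ', 0 ≤ b t θ' ω) ∧ (∑ θ', b t θ' ω = 1) ∧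
        0 < b t θstar ω ∧ b t θ ω = Y t ω ^ 2 * b t θstar ω := by
      intro t
      induction t with
      | zero =>
        refine ⟨fun θ' => by rw [hb_init]; exact hb0_nonneg θ',
          by simp only [hb_init]; exact hb0_sum,
          by rw [hb_init]; exact hb0_star, ?_⟩
        rw [hb_init, hb_init]
        have hY0v : Y 0 ω = c0 := by simp [hY_def]
        rw [hY0v, hc0_def, Real.sq_sqrt (div_nonneg (hb0_nonneg θ) hb0_star.le)]
        field_simp
      | succ t iht =>
        obtain ⟨hnn, hsum, hpos, heq⟩ := iht
        have hastar : 0 < l θstar (q (t + 1)) (s (t + 1) ω) := hG (t + 1) (Nat.le_add_left 1 t)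
        have hDpos : 0 < ∑ θ', l θ' (q (t + 1)) (s (t + 1) ω) * b t θ' ω := by
          have h1 : l θstar (q (t + 1)) (s (t + 1) ω) * b t θstar ω ≤
              ∑ θ', l θ' (q (t + 1)) (s (t + 1) ω) * b t θ' ω :=
            Finset.single_le_sum
              (f := fun θ' => l θ' (q (t + 1)) (s (t + 1) ω) * b t θ' ω)
              (fun θ' _ => mul_nonneg (hl_nonneg _ _ _) (hnn θ')) (Finset.mem_univ θstar)
          exact lt_of_lt_of_le (mul_pos hastar hpos) h1
        refine ⟨fun θ' => ?_, ?_, ?_, ?_⟩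
        · rw [hb_upd]
          exact div_nonneg (mul_nonneg (hl_nonneg _ _ _) (hnn θ')) hDpos.le
        · rw [Finset.sum_congr rfl fun θ' _ => hb_upd t θ' ω, ← Finset.sum_div]
          exact div_self hDpos.ne'
        · rw [hb_upd]
          exact div_pos (mul_pos hastar hpos) hDpos
        · rw [hb_upd t θ ω, hb_upd t θstar ω, heq, hYsucc t ω]
          have hsq : hf (t + 1) (s (t + 1) ω) ^ 2 =
              l θ (q (t + 1)) (s (t + 1) ω) / l θstar (q (t + 1)) (s (t + 1) ω) := by
            rw [hhf_def]
            exact Real.sq_sqrt (div_nonneg (hl_nonneg _ _ _) hastar.le)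
          rw [show (Y t ω * hf (t + 1) (s (t + 1) ω)) ^ 2 =
              Y t ω ^ 2 * (l θ (q (t + 1)) (s (t + 1) ω) / l θstar (q (t + 1)) (s (t + 1) ω))
              from by rw [mul_pow, hsq]]
          field_simp
    have hub : ∀ t, b t θ ω ≤ Y t ω ^ 2 := by
      intro t
      obtain ⟨hnn, hsum, hpos, heq⟩ := hbel t
      have hle1 : b t θstar ω ≤ 1 := by
        rw [← hsum]
        exact Finset.single_le_sum (fun θ' _ => hnn θ') (Finset.mem_univ θstar)
      rw [heq]
      exact mul_le_of_le_one_right (sq_nonneg _) hle1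
    have hY2 : Tendsto (fun t => Y t ω ^ 2) atTop (nhds 0) := by
      have h1 := hY0.mul hY0
      rw [mul_zero] at h1
      simpa [pow_two] using h1
    exact squeeze_zero (fun t => (hbel t).1 θ) hub hY2
  have hsubN : {ω | ¬ Tendsto (fun t => b t θ ω) atTop (nhds 0)} ⊆ N := by
    intro ω hω
    by_contra hmem
    exact hω (hgood ω hmem)
  rw [MeasureTheory.ae_iff]
  exact measure_mono_null hsubN hNnull
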